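/- Let D be an integral domain with quotient field K and let ⋆ be a semistar operation of D. Then ▲^⋆ := ▲^⋆_K is a strict extension of ⋆ to D[X], and it is the largest strict extension: every semistar operation ★ of D[X] that is a strict extension of ⋆ satisfies ★ ≤ ▲^⋆ (i.e., A^★ ⊆ A^{▲^⋆} for all A ∈ F̄(D[X])). -/

import Mathlib

/- Preliminaries: semistar operations on an integral domain `R` with quotient field `F`
(submodules of `F` over `R`), polynomial extension of semistar operations from `D`
to `D[X]` (viewed inside the quotient field `K(X) = RatFunc K` of `D[X]`). -/

open Polynomial Pointwise

set_option synthInstance.maxHeartbeats 1000000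
set_option maxHeartbeats 1000000

open scoped Classical

noncomputable section

section Generic

variable (R F : Type*) [CommRing R] [Field F] [Algebra R F]

/-- `o` is a semistar operation of `R` (on the nonzero `R`-submodules of the
quotient field `F`). -/
def IsSemistarOp (o : Submodule R F → Submodule R F) : Prop :=
  (∀ x : F, x ≠ 0 → ∀ E : Submodule R F, E ≠ ⊥ → o (x • E) = x • o E) ∧
  (∀ E G : Submodule R F, E ≠ ⊥ → G ≠ ⊥ → E ≤ G → o E ≤ o G) ∧
  (∀ E : Submodule R F, E ≠ ⊥ → E ≤ o E) ∧
  (∀ E : Submodule R F, E ≠ ⊥ → o (o E) = o E)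

/-- The finite-type operation `⋆_f` associated to `⋆`:
`E^{⋆_f} = ⋃ { G^⋆ : G nonzero finitely generated, G ⊆ E }`. -/
def finTypeFun (o : Submodule R F → Submodule R F) : Submodule R F → Submodule R F :=
  fun E => ⨆ (G : Submodule R F) (_ : G ≠ ⊥) (_ : G.FG) (_ : G ≤ E), o G

/-- `⋆` is of finite type, i.e. `⋆ = ⋆_f`. -/
def IsFiniteTypeFun (o : Submodule R F → Submodule R F) : Prop :=
  ∀ E : Submodule R F, E ≠ ⊥ → o E = finTypeFun R F o E

/-- `⋆` is stable: `(E ∩ G)^⋆ = E^⋆ ∩ G^⋆`. -/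
def IsStableFun (o : Submodule R F → Submodule R F) : Prop :=
  ∀ E G : Submodule R F, E ≠ ⊥ → G ≠ ⊥ → o (E ⊓ G) = o E ⊓ o G

/-- An ideal of `R` viewed as an `R`-submodule of `F`. -/
def idealSub (J : Ideal R) : Submodule R F := Submodule.map (Algebra.linearMap R F) J

/-- `(E : J) = { x ∈ F : xJ ⊆ E }` for an ideal `J` of `R`. -/
def colonIdeal (E : Submodule R F) (J : Ideal R) : Submodule R F where
  carrier := { x : F | ∀ a ∈ J, a • x ∈ E }
  add_mem' := fun {x y} hx hy a ha => by
    simpa [smul_add] using E.add_mem (hx a ha) (hy a ha)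
  zero_mem' := fun a _ => by simpa using E.zero_mem
  smul_mem' := fun r x hx a ha => by
    rw [← mul_smul, mul_comm, mul_smul]
    exact E.smul_mem r (hx a ha)

/-- The stable finite-type operation `tilde ⋆` associated to `⋆`:
`E^{tilde ⋆} = ⋃ { (E : J) : J nonzero finitely generated integral ideal with J^⋆ = R^⋆ }`. -/
def tildeFun (o : Submodule R F → Submodule R F) : Submodule R F → Submodule R F :=
  fun E => ⨆ (J : Ideal R) (_ : J ≠ ⊥) (_ : J.FG)
    (_ : o (idealSub R F J) = o (1 : Submodule R F)), colonIdeal R F E J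

/-- The `v`-operation: `E^v = (R : (R : E))` for `E` a nonzero fractional ideal,
and `E^v = F` otherwise. -/
def vFun : Submodule R F → Submodule R F := fun E =>
  if ∃ d : R, d ≠ 0 ∧ ∀ x ∈ E, d • x ∈ (1 : Submodule R F) then
    (1 : Submodule R F) / ((1 : Submodule R F) / E)
  else ⊤

/-- The `eab` operation `⋆_a` associated to `⋆`. -/
def aFun (o : Submodule R F → Submodule R F) : Submodule R F → Submodule R F := fun E =>
  ⨆ (G : Submodule R F) (_ : G ≠ ⊥) (_ : G.FG) (_ : G ≤ E),
    ⨆ (H : Submodule R F) (_ : H ≠ ⊥) (_ : H.FG), o (G * H) / o H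

/-- `I` is a quasi-`⋆`-ideal: a nonzero integral ideal with `I^⋆ ∩ R = I`. -/
def isQuasiIdealFun (o : Submodule R F → Submodule R F) (I : Ideal R) : Prop :=
  I ≠ ⊥ ∧ (o (idealSub R F I)).comap (Algebra.linearMap R F) = I

/-- `I` is a quasi-`⋆`-maximal ideal: maximal among proper quasi-`⋆`-ideals. -/
def isQuasiMaximalFun (o : Submodule R F → Submodule R F) (I : Ideal R) : Prop :=
  isQuasiIdealFun R F o I ∧ I ≠ ⊤ ∧
    ∀ J : Ideal R, isQuasiIdealFun R F o J → J ≠ ⊤ → I ≤ J → I = J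

/-- The `v`-operation relative to an overring `R'` (an `R`-submodule of `F`):
`B ↦ (R' : (R' : B))` for `B` a nonzero fractional ideal of `R'`, `F` otherwise. -/
def vRelFun (R' B : Submodule R F) : Submodule R F :=
  if ∃ z ∈ R', z ≠ 0 ∧ ∀ x ∈ B, z * x ∈ R' then R' / (R' / B) else ⊤

/-- The `t`-operation relative to an overring `R'`: finite-type operation associated to
the `v`-operation of `R'` (the union being over nonzero finitely generated
`R'`-submodules contained in `B`). -/
def tRelFun (R' B : Submodule R F) : Submodule R F :=
  ⨆ (G : Submodule R F) (_ : G ≠ ⊥)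
    (_ : ∃ S : Finset F, G = R' * Submodule.span R (S : Set F)) (_ : G ≤ B),
    vRelFun R F R' G

end Generic

section Poly

variable (D K : Type*) [CommRing D] [IsDomain D] [Field K] [Algebra D K] [IsFractionRing D K]

/-- The canonical ring homomorphism `D[X] → K(X)`. -/
def polyToRF : Polynomial D →+* RatFunc K :=
  (algebraMap (Polynomial K) (RatFunc K)).comp (Polynomial.mapRingHom (algebraMap D K))

/-- `K(X)` is an algebra over `D[X]`; in fact it is the quotient field of `D[X]`. -/
instance (priority := 100) : Algebra (Polynomial D) (RatFunc K) := (polyToRF D K).toAlgebra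

/-- For a `D`-submodule `E` of `K`, the `D[X]`-submodule `E[X]` of `K(X)`:
polynomials all of whose coefficients lie in `E`. -/
def polyExt (E : Submodule D K) : Submodule (Polynomial D) (RatFunc K) where
  carrier := { f : RatFunc K | ∃ p : Polynomial K, (∀ n, p.coeff n ∈ E) ∧
      f = algebraMap (Polynomial K) (RatFunc K) p }
  add_mem' := by
    rintro f g ⟨p, hp, rfl⟩ ⟨q, hq, rfl⟩
    exact ⟨p + q, fun n => by simpa using E.add_mem (hp n) (hq n), by simp⟩
  zero_mem' := ⟨0, fun n => by simpa using E.zero_mem, by simp⟩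
  smul_mem' := by
    rintro c f ⟨p, hp, rfl⟩
    refine ⟨Polynomial.map (algebraMap D K) c * p, fun n => ?_, ?_⟩
    · rw [Polynomial.coeff_mul]
      refine Submodule.sum_mem E fun ij _ => ?_
      rw [Polynomial.coeff_map, ← Algebra.smul_def]
      exact E.smul_mem _ (hp ij.2)
    · rw [Algebra.smul_def, RingHom.algebraMap_toAlgebra, map_mul]
      unfold polyToRF
      simp

/-- The contraction `B ∩ K` of a `D[X]`-submodule `B` of `K(X)` to a `D`-submodule of `K`. -/
def contractToBase (B : Submodule (Polynomial D) (RatFunc K)) : Submodule D K where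
  carrier := { x : K | algebraMap K (RatFunc K) x ∈ B }
  add_mem' := fun {x y} hx hy => by
    simpa [Set.mem_setOf_eq, map_add] using B.add_mem hx hy
  zero_mem' := by simpa using B.zero_mem
  smul_mem' := fun d x hx => by
    have h : algebraMap K (RatFunc K) (d • x)
        = (Polynomial.C d : Polynomial D) • (algebraMap K (RatFunc K) x) := by
      rw [Algebra.smul_def d x, map_mul, Algebra.smul_def, RingHom.algebraMap_toAlgebra]
      unfold polyToRF
      simp only [RingHom.coe_comp, Function.comp_apply, Polynomial.coe_mapRingHom,
        Polynomial.map_C, RatFunc.algebraMap_C, RatFunc.algebraMap_eq_C]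
    show algebraMap K (RatFunc K) (d • x) ∈ B
    rw [h]
    exact B.smul_mem (Polynomial.C d) hx

/-- The content `c_D(S)`: the `D`-submodule of `K` generated by the coefficients of all
polynomials belonging to `S`. -/
def contentOf (S : Set (RatFunc K)) : Submodule D K :=
  Submodule.span D { x : K | ∃ p : Polynomial K,
    algebraMap (Polynomial K) (RatFunc K) p ∈ S ∧ ∃ n, p.coeff n = x }

/-- The semistar operation `▲^⋆_T` of `D[X]` associated to a semistar operation `⋆` of `D`
and an overring `T` of `D`:
`A ↦ ⋂ { z⁻¹ (c_D(zA))^⋆[X] : z ∈ (T[X] : A), z ≠ 0 }` if `(T[X] : A) ≠ 0`, else `A ↦ K(X)`. -/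
def bigTriT (o : Submodule D K → Submodule D K) (T : Subalgebra D K) :
    Submodule (Polynomial D) (RatFunc K) → Submodule (Polynomial D) (RatFunc K) := fun A =>
  if ∃ z : RatFunc K, z ≠ 0 ∧ ∀ a ∈ A, z * a ∈ polyExt D K (Subalgebra.toSubmodule T) then
    ⨅ (z : RatFunc K) (_ : z ≠ 0) (_ : ∀ a ∈ A, z * a ∈ polyExt D K (Subalgebra.toSubmodule T)),
      z⁻¹ • polyExt D K (o (contentOf D K (z • (A : Set (RatFunc K)))))
  else ⊤

/-- `▲^⋆ := ▲^⋆_K`, the largest strict extension of `⋆` to `D[X]`. -/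
def bigTri (o : Submodule D K → Submodule D K) :
    Submodule (Polynomial D) (RatFunc K) → Submodule (Polynomial D) (RatFunc K) :=
  bigTriT D K o ⊤

/-- `b` is an extension of `⋆` to `D[X]` : `E^⋆ = (E[X])^b ∩ K`. -/
def IsExtensionFun (o : Submodule D K → Submodule D K)
    (b : Submodule (Polynomial D) (RatFunc K) → Submodule (Polynomial D) (RatFunc K)) : Prop :=
  ∀ E : Submodule D K, E ≠ ⊥ → o E = contractToBase D K (b (polyExt D K E))

/-- `b` is a strict extension of `⋆` to `D[X]` : `(E[X])^b = E^⋆[X]`. -/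
def IsStrictExtensionFun (o : Submodule D K → Submodule D K)
    (b : Submodule (Polynomial D) (RatFunc K) → Submodule (Polynomial D) (RatFunc K)) : Prop :=
  ∀ E : Submodule D K, E ≠ ⊥ → b (polyExt D K E) = polyExt D K (o E)

/-- `⋏^⋆ : A ↦ ⋂ { A^★ : ★ a semistar operation of D[X] extending ⋆ }`. -/
def curlyFun (o : Submodule D K → Submodule D K) :
    Submodule (Polynomial D) (RatFunc K) → Submodule (Polynomial D) (RatFunc K) := fun A =>
  ⨅ (b : Submodule (Polynomial D) (RatFunc K) → Submodule (Polynomial D) (RatFunc K))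
    (_ : IsSemistarOp (Polynomial D) (RatFunc K) b) (_ : IsExtensionFun D K o b), b A

/-- The localization `D_Q` of `D` at a prime ideal `Q`, as a `D`-submodule of `K`. -/
def locSub (Q : Ideal D) : Submodule D K :=
  Submodule.span D { x : K | ∃ s : D, s ∉ Q ∧ s • x ∈ (1 : Submodule D K) }

/-- The content of an ideal `I` of `D[X]`: the `D`-submodule of `K` generated by the
coefficients of the polynomials in `I`. -/
def contentOfIdeal (I : Ideal (Polynomial D)) : Submodule D K :=
  Submodule.span D { x : K | ∃ p ∈ I, ∃ n, algebraMap D K (Polynomial.coeff p n) = x }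

/-- The Nagata ring `D_Q(X)`, as a subset of `K(X)`: fractions `f/g` with
`f, g ∈ D_Q[X]` and the coefficients of `g` generating the unit ideal of `D_Q`. -/
def nagataSet (Q : Ideal D) : Set (RatFunc K) :=
  { u : RatFunc K | ∃ g : Polynomial K, (∀ n, g.coeff n ∈ locSub D K Q) ∧
      locSub D K Q * Submodule.span D { x : K | ∃ n, g.coeff n = x } = locSub D K Q ∧
      u * algebraMap (Polynomial K) (RatFunc K) g ∈ polyExt D K (locSub D K Q) }

end Poly

section ProofHelpers

variable {D K : Type*} [CommRing D] [IsDomain D] [Field K] [Algebra D K] [IsFractionRing D K]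

lemma iota_inj : Function.Injective (algebraMap (Polynomial K) (RatFunc K)) :=
  RatFunc.algebraMap_injective K

lemma polyExt_mono {E G : Submodule D K} (h : E ≤ G) : polyExt D K E ≤ polyExt D K G := by
  rintro f ⟨p, hp, rfl⟩; exact ⟨p, fun n => h (hp n), rfl⟩

lemma const_mem_polyExt {E : Submodule D K} {x : K} (hx : x ∈ E) :
    algebraMap (Polynomial K) (RatFunc K) (Polynomial.C x) ∈ polyExt D K E :=
  ⟨Polynomial.C x, fun n => by
    rw [Polynomial.coeff_C]; split_ifs; exacts [hx, E.zero_mem], rfl⟩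

lemma polyExt_ne_bot {E : Submodule D K} (hE : E ≠ ⊥) : polyExt D K E ≠ ⊥ := by
  rw [Submodule.ne_bot_iff] at hE ⊢
  obtain ⟨x, hxE, hx⟩ := hE
  refine ⟨_, const_mem_polyExt hxE, fun h => hx ?_⟩
  have : (Polynomial.C x : Polynomial K) = 0 := iota_inj (h.trans (map_zero _).symm)
  exact (Polynomial.C_ne_zero.mpr hx this).elim

lemma mem_KX {f : RatFunc K} :
    f ∈ polyExt D K (Subalgebra.toSubmodule (⊤ : Subalgebra D K)) ↔
      ∃ p : Polynomial K, f = algebraMap (Polynomial K) (RatFunc K) p :=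
  ⟨fun ⟨p, _, hf⟩ => ⟨p, hf⟩, fun ⟨p, hf⟩ => ⟨p, fun _ => by simp, hf⟩⟩

lemma coeff_mem_contentOf {S : Set (RatFunc K)} {p : Polynomial K}
    (hp : algebraMap (Polynomial K) (RatFunc K) p ∈ S) (n : ℕ) :
    p.coeff n ∈ contentOf D K S :=
  Submodule.subset_span ⟨p, hp, n, rfl⟩

lemma contentOf_mono {S T : Set (RatFunc K)} (h : S ⊆ T) :
    contentOf D K S ≤ contentOf D K T :=
  Submodule.span_mono (fun _x => fun ⟨p, hpS, hn⟩ => ⟨p, h hpS, hn⟩)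

lemma mem_polyExt_contentOf {S : Set (RatFunc K)} {p : Polynomial K}
    (hp : algebraMap (Polynomial K) (RatFunc K) p ∈ S) :
    algebraMap (Polynomial K) (RatFunc K) p ∈ polyExt D K (contentOf D K S) :=
  ⟨p, fun n => coeff_mem_contentOf hp n, rfl⟩

lemma contentOf_polyExt {E : Submodule D K} :
    contentOf D K (polyExt D K E : Set (RatFunc K)) = E := by
  apply le_antisymm
  · rw [contentOf, Submodule.span_le]
    rintro x ⟨p, ⟨q, hq, hpq⟩, n, rfl⟩
    obtain rfl : p = q := iota_inj hpq
    exact hq n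
  · intro x hx
    exact Submodule.subset_span ⟨Polynomial.C x, const_mem_polyExt hx, 0, Polynomial.coeff_C_zero⟩

omit [CommRing D] [IsDomain D] [Field K] [Algebra D K] [IsFractionRing D K] in
lemma mem_smul_iff {R F : Type*} [CommRing R] [Field F] [Algebra R F] {x : F}
    {M : Submodule R F} {y : F} : y ∈ x • M ↔ ∃ m ∈ M, x * m = y := by
  rw [← SetLike.mem_coe, Submodule.coe_pointwise_smul]
  constructor
  · rintro ⟨m, hm, rfl⟩; exact ⟨m, hm, (smul_eq_mul x m).symm ▸ rfl⟩
  · rintro ⟨m, hm, rfl⟩; exact ⟨m, hm, smul_eq_mul x m ▸ rfl⟩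

omit [CommRing D] [IsDomain D] [Field K] [Algebra D K] [IsFractionRing D K] in
lemma mem_inv_smul {R F : Type*} [CommRing R] [Field F] [Algebra R F] {x : F} (hx : x ≠ 0)
    {M : Submodule R F} {y : F} : y ∈ x⁻¹ • M ↔ x * y ∈ M := by
  rw [mem_smul_iff]
  constructor
  · rintro ⟨m, hm, rfl⟩
    rwa [← mul_assoc, mul_inv_cancel₀ hx, one_mul]
  · intro h
    exact ⟨x * y, h, by rw [← mul_assoc, inv_mul_cancel₀ hx, one_mul]⟩

omit [CommRing D] [IsDomain D] [Field K] [Algebra D K] [IsFractionRing D K] in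
lemma smul_submodule_mono {R F : Type*} [CommRing R] [Field F] [Algebra R F] (x : F)
    {M N : Submodule R F} (h : M ≤ N) : x • M ≤ x • N := by
  intro y hy
  rw [mem_smul_iff] at hy ⊢
  obtain ⟨m, hm, rfl⟩ := hy
  exact ⟨m, h hm, rfl⟩

omit [CommRing D] [IsDomain D] [Field K] [Algebra D K] [IsFractionRing D K] in
lemma smul_submodule_ne_bot {R F : Type*} [CommRing R] [Field F] [Algebra R F] {x : F}
    (hx : x ≠ 0) {M : Submodule R F} (hM : M ≠ ⊥) : x • M ≠ ⊥ := by
  rw [Submodule.ne_bot_iff] at hM ⊢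
  obtain ⟨m, hm, hm0⟩ := hM
  exact ⟨x * m, mem_smul_iff.mpr ⟨m, hm, rfl⟩, mul_ne_zero hx hm0⟩

variable (star : Submodule D K → Submodule D K)

lemma bigTri_le_term {A : Submodule (Polynomial D) (RatFunc K)} {z : RatFunc K} (hz : z ≠ 0)
    (hzA : ∀ a ∈ A, z * a ∈ polyExt D K (Subalgebra.toSubmodule (⊤ : Subalgebra D K))) :
    bigTri D K star A ≤
      z⁻¹ • polyExt D K (star (contentOf D K (z • (A : Set (RatFunc K))))) := by
  unfold bigTri bigTriT
  rw [if_pos ⟨z, hz, hzA⟩]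
  exact iInf_le_of_le z (iInf_le_of_le hz (iInf_le_of_le hzA le_rfl))

lemma le_bigTri {A B : Submodule (Polynomial D) (RatFunc K)}
    (h : ∀ z : RatFunc K, z ≠ 0 →
      (∀ a ∈ A, z * a ∈ polyExt D K (Subalgebra.toSubmodule (⊤ : Subalgebra D K))) →
      B ≤ z⁻¹ • polyExt D K (star (contentOf D K (z • (A : Set (RatFunc K)))))) :
    B ≤ bigTri D K star A := by
  unfold bigTri bigTriT
  split_ifs with hc
  · exact le_iInf fun z => le_iInf fun hz => le_iInf fun hzA => h z hz hzA
  · exact le_top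

lemma contentOf_smul_ne_bot {A : Submodule (Polynomial D) (RatFunc K)} (hA : A ≠ ⊥)
    {z : RatFunc K} (hz : z ≠ 0)
    (hzA : ∀ a ∈ A, z * a ∈ polyExt D K (Subalgebra.toSubmodule (⊤ : Subalgebra D K))) :
    contentOf D K (z • (A : Set (RatFunc K))) ≠ ⊥ := by
  obtain ⟨a, haA, ha⟩ := (Submodule.ne_bot_iff A).mp hA
  obtain ⟨p, hp⟩ := mem_KX.mp (hzA a haA)
  have hmem : algebraMap (Polynomial K) (RatFunc K) p ∈ z • (A : Set (RatFunc K)) :=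
    Set.mem_smul_set.mpr ⟨a, haA, by rw [smul_eq_mul, ← hp]⟩
  have hp0 : p ≠ 0 := by
    intro h
    apply mul_ne_zero hz ha
    rw [hp, h, map_zero]
  obtain ⟨n, hn⟩ : ∃ n, p.coeff n ≠ 0 := by
    by_contra h
    push_neg at h
    exact hp0 (Polynomial.ext fun n => by simp [h n])
  exact (Submodule.ne_bot_iff _).mpr ⟨p.coeff n, coeff_mem_contentOf hmem n, hn⟩

end ProofHelpers

section MainLemmas

set_option linter.unusedSectionVars false

variable {D K : Type*} [CommRing D] [IsDomain D] [Field K] [Algebra D K] [IsFractionRing D K]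
variable {star : Submodule D K → Submodule D K} (hstar : IsSemistarOp D K star)

include hstar in
/-- Extensivity of `▲`. -/
lemma bigTri_extensive {A : Submodule (Polynomial D) (RatFunc K)} (hA : A ≠ ⊥) :
    A ≤ bigTri D K star A := by
  apply le_bigTri
  intro z hz hzA
  intro a ha
  rw [mem_inv_smul hz]
  obtain ⟨p, hp⟩ := mem_KX.mp (hzA a ha)
  rw [hp]
  refine polyExt_mono (hstar.2.2.1 _ (contentOf_smul_ne_bot hA hz hzA)) ?_
  exact mem_polyExt_contentOf (Set.mem_smul_set.mpr ⟨a, ha, by rw [smul_eq_mul, ← hp]⟩)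

include hstar in
lemma bigTri_ne_bot {A : Submodule (Polynomial D) (RatFunc K)} (hA : A ≠ ⊥) :
    bigTri D K star A ≠ ⊥ := fun h => hA (le_bot_iff.mp (h ▸ bigTri_extensive hstar hA))

include hstar in
/-- Monotonicity of `▲`. -/
lemma bigTri_mono {A B : Submodule (Polynomial D) (RatFunc K)} (hA : A ≠ ⊥) (hAB : A ≤ B) :
    bigTri D K star A ≤ bigTri D K star B := by
  apply le_bigTri
  intro z hz hzB
  have hzA : ∀ a ∈ A, z * a ∈ polyExt D K (Subalgebra.toSubmodule (⊤ : Subalgebra D K)) :=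
    fun a ha => hzB a (hAB ha)
  refine le_trans (bigTri_le_term star hz hzA) (smul_submodule_mono _ (polyExt_mono ?_))
  have hB : B ≠ ⊥ := fun h => hA (le_bot_iff.mp (h ▸ hAB))
  exact hstar.2.1 _ _ (contentOf_smul_ne_bot hA hz hzA) (contentOf_smul_ne_bot hB hz hzB)
    (contentOf_mono (Set.smul_set_mono fun _ h => hAB h))

/-- One-sided homogeneity of `▲`. -/
lemma bigTri_smul_le {x : RatFunc K} (hx : x ≠ 0) {A : Submodule (Polynomial D) (RatFunc K)} :
    x • bigTri D K star A ≤ bigTri D K star (x • A) := by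
  apply le_bigTri
  intro z hz hzxA
  have hzx : z * x ≠ 0 := mul_ne_zero hz hx
  have hzxA' : ∀ a ∈ A, (z * x) * a ∈ polyExt D K (Subalgebra.toSubmodule (⊤ : Subalgebra D K)) := by
    intro a ha
    rw [mul_assoc]
    exact hzxA (x * a) (mem_smul_iff.mpr ⟨a, ha, rfl⟩)
  have h1 := bigTri_le_term star hzx hzxA'
  have h2 := smul_submodule_mono x h1
  rw [smul_smul] at h2
  have hsc : x * (z * x)⁻¹ = z⁻¹ := by
    field_simp
  rw [hsc] at h2
  refine le_trans h2 (le_of_eq ?_)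
  congr 2
  rw [Submodule.coe_pointwise_smul, smul_smul]

/-- Homogeneity of `▲`. -/
lemma bigTri_smul {x : RatFunc K} (hx : x ≠ 0) (A : Submodule (Polynomial D) (RatFunc K)) :
    bigTri D K star (x • A) = x • bigTri D K star A := by
  refine le_antisymm ?_ (bigTri_smul_le hx)
  have h2 := bigTri_smul_le (star := star) (x := x⁻¹) (inv_ne_zero hx) (A := x • A)
  rw [smul_smul, inv_mul_cancel₀ hx, one_smul] at h2
  calc bigTri D K star (x • A) = x • (x⁻¹ • bigTri D K star (x • A)) := by
        rw [smul_smul, mul_inv_cancel₀ hx, one_smul]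
    _ ≤ x • bigTri D K star A := smul_submodule_mono x h2

lemma bigTri_top : bigTri D K star (⊤ : Submodule (Polynomial D) (RatFunc K)) = ⊤ := by
  unfold bigTri bigTriT
  rw [if_neg]
  rintro ⟨z, hz, hzT⟩
  have hX0 : algebraMap (Polynomial K) (RatFunc K) Polynomial.X ≠ 0 := by
    intro h
    exact Polynomial.X_ne_zero (iota_inj (h.trans (map_zero _).symm))
  have hm := hzT (z⁻¹ * (algebraMap (Polynomial K) (RatFunc K) Polynomial.X)⁻¹) Submodule.mem_top
  rw [← mul_assoc, mul_inv_cancel₀ hz, one_mul] at hm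
  obtain ⟨p, hp⟩ := mem_KX.mp hm
  have h1 : algebraMap (Polynomial K) (RatFunc K) (Polynomial.X * p) =
      algebraMap (Polynomial K) (RatFunc K) 1 := by
    rw [map_mul, ← hp, mul_inv_cancel₀ hX0, map_one]
  have h2 : (Polynomial.X * p : Polynomial K) = 1 := iota_inj h1
  have h3 := congrArg (fun q => Polynomial.coeff q 0) h2
  simp [Polynomial.mul_coeff_zero] at h3

include hstar in
/-- Idempotence of `▲`. -/
lemma bigTri_idem {A : Submodule (Polynomial D) (RatFunc K)} (hA : A ≠ ⊥) :
    bigTri D K star (bigTri D K star A) = bigTri D K star A := by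
  by_cases hc : ∃ z : RatFunc K, z ≠ 0 ∧
      ∀ a ∈ A, z * a ∈ polyExt D K (Subalgebra.toSubmodule (⊤ : Subalgebra D K))
  · refine le_antisymm (le_bigTri star ?_)
      (bigTri_extensive hstar (bigTri_ne_bot hstar hA))
    intro z hz hzA
    set c := contentOf D K (z • (A : Set (RatFunc K))) with hcdef
    have hcbot : c ≠ ⊥ := contentOf_smul_ne_bot hA hz hzA
    have hscbot : star c ≠ ⊥ := fun h => hcbot (le_bot_iff.mp (h ▸ hstar.2.2.1 c hcbot))
    have hAle : bigTri D K star A ≤ z⁻¹ • polyExt D K (star c) := bigTri_le_term star hz hzA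
    have hzB : ∀ b ∈ bigTri D K star A, z * b ∈
        polyExt D K (Subalgebra.toSubmodule (⊤ : Subalgebra D K)) := by
      intro b hb
      have := (mem_inv_smul hz).mp (hAle hb)
      exact polyExt_mono le_top this
    refine le_trans (bigTri_le_term star hz hzB) (smul_submodule_mono _ (polyExt_mono ?_))
    have hBbot : bigTri D K star A ≠ ⊥ := bigTri_ne_bot hstar hA
    have h1 : contentOf D K (z • (bigTri D K star A : Set (RatFunc K))) ≤ star c := by
      refine le_trans (contentOf_mono ?_) (le_of_eq (contentOf_polyExt))
      rintro y hy
      obtain ⟨b, hb, rfl⟩ := Set.mem_smul_set.mp hy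
      rw [smul_eq_mul]
      exact (mem_inv_smul hz).mp (hAle hb)
    have h2 := hstar.2.1 _ _ (contentOf_smul_ne_bot hBbot hz hzB) hscbot h1
    rwa [hstar.2.2.2 c hcbot] at h2
  · have hAtop : bigTri D K star A = ⊤ := by
      unfold bigTri bigTriT
      rw [if_neg hc]
    rw [hAtop, bigTri_top]

include hstar in
/-- `▲` is a strict extension of `⋆`. -/
lemma bigTri_strict {E : Submodule D K} (hE : E ≠ ⊥) :
    bigTri D K star (polyExt D K E) = polyExt D K (star E) := by
  refine le_antisymm ?_ (le_bigTri star ?_)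
  · have hz1 : ∀ a ∈ polyExt D K E, (1 : RatFunc K) * a ∈
        polyExt D K (Subalgebra.toSubmodule (⊤ : Subalgebra D K)) := by
      intro a ha
      rw [one_mul]
      exact polyExt_mono le_top ha
    have h := bigTri_le_term star one_ne_zero hz1
    rwa [inv_one, one_smul, one_smul, contentOf_polyExt] at h
  · intro z hz hzE
    set c := contentOf D K (z • (polyExt D K E : Set (RatFunc K))) with hcdef
    have hcbot : c ≠ ⊥ := contentOf_smul_ne_bot (polyExt_ne_bot hE) hz hzE
    -- z is (the image of) a polynomial p
    obtain ⟨e, heE, he⟩ := (Submodule.ne_bot_iff E).mp hE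
    obtain ⟨q, hq⟩ := mem_KX.mp (hzE _ (const_mem_polyExt heE))
    have hCe : algebraMap (Polynomial K) (RatFunc K) (Polynomial.C e) ≠ 0 := by
      intro h
      exact Polynomial.C_ne_zero.mpr he (iota_inj (h.trans (map_zero _).symm))
    set p := q * Polynomial.C e⁻¹ with hpdef
    have hzp : z = algebraMap (Polynomial K) (RatFunc K) p := by
      have h2 : algebraMap (Polynomial K) (RatFunc K) p *
          algebraMap (Polynomial K) (RatFunc K) (Polynomial.C e) =
          algebraMap (Polynomial K) (RatFunc K) q := by
        rw [← map_mul, hpdef, mul_assoc, ← Polynomial.C_mul, inv_mul_cancel₀ he,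
          Polynomial.C_1, mul_one]
      exact mul_right_cancel₀ hCe (hq.trans h2.symm)
    -- key: for each coefficient of p and each y ∈ star E, the product is in star c
    have key : ∀ (i : ℕ) (y : K), y ∈ star E → p.coeff i * y ∈ star c := by
      intro i y hy
      by_cases hpi : p.coeff i = 0
      · rw [hpi, zero_mul]; exact (star c).zero_mem
      · have hsmul : p.coeff i • E ≤ c := by
          intro w hw
          obtain ⟨e', he', rfl⟩ := mem_smul_iff.mp hw
          have hmem : algebraMap (Polynomial K) (RatFunc K) (p * Polynomial.C e') ∈
              z • (polyExt D K E : Set (RatFunc K)) := by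
            refine Set.mem_smul_set.mpr ⟨algebraMap (Polynomial K) (RatFunc K)
              (Polynomial.C e'), const_mem_polyExt he', ?_⟩
            rw [smul_eq_mul, hzp, ← map_mul]
          have := coeff_mem_contentOf (D := D) hmem i
          rwa [Polynomial.coeff_mul_C] at this
        have h3 : p.coeff i * y ∈ p.coeff i • star E := mem_smul_iff.mpr ⟨y, hy, rfl⟩
        rw [← hstar.1 _ hpi E hE] at h3
        exact hstar.2.1 _ _ (smul_submodule_ne_bot hpi hE) hcbot hsmul h3
    intro f hf
    obtain ⟨r, hr, rfl⟩ := hf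
    rw [mem_inv_smul hz]
    refine ⟨p * r, fun n => ?_, by rw [hzp, ← map_mul]⟩
    rw [Polynomial.coeff_mul]
    exact Submodule.sum_mem _ fun ij _ => key ij.1 _ (hr ij.2)

end MainLemmas

/- The theorem. -/

theorem bigTri_largest_strict_extension (D K : Type*) [CommRing D] [IsDomain D] [Field K] [Algebra D K] [IsFractionRing D K]
    (star : Submodule D K → Submodule D K) (hstar : IsSemistarOp D K star) :
    IsSemistarOp (Polynomial D) (RatFunc K) (bigTri D K star) ∧
    IsStrictExtensionFun D K star (bigTri D K star) ∧
    ∀ b : Submodule (Polynomial D) (RatFunc K) → Submodule (Polynomial D) (RatFunc K),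
      IsSemistarOp (Polynomial D) (RatFunc K) b → IsStrictExtensionFun D K star b →
      ∀ A : Submodule (Polynomial D) (RatFunc K), A ≠ ⊥ → b A ≤ bigTri D K star A := by
  refine ⟨⟨fun x hx A _ => bigTri_smul hx A,
    fun A B hA _ hAB => bigTri_mono hstar hA hAB,
    fun A hA => bigTri_extensive hstar hA,
    fun A hA => bigTri_idem hstar hA⟩,
    fun E hE => bigTri_strict hstar hE, ?_⟩
  intro b hb hbs A hA
  apply le_bigTri
  intro z hz hzA
  set c := contentOf D K (z • (A : Set (RatFunc K))) with hcdef
  have hc : c ≠ ⊥ := contentOf_smul_ne_bot hA hz hzA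
  have hAle : A ≤ z⁻¹ • polyExt D K c := by
    intro a ha
    rw [mem_inv_smul hz]
    obtain ⟨p, hp⟩ := mem_KX.mp (hzA a ha)
    rw [hp]
    exact mem_polyExt_contentOf (Set.mem_smul_set.mpr ⟨a, ha, by rw [smul_eq_mul, ← hp]⟩)
  have hne : z⁻¹ • polyExt D K c ≠ ⊥ :=
    smul_submodule_ne_bot (inv_ne_zero hz) (polyExt_ne_bot hc)
  calc b A ≤ b (z⁻¹ • polyExt D K c) := hb.2.1 _ _ hA hne hAle
    _ = z⁻¹ • b (polyExt D K c) := hb.1 _ (inv_ne_zero hz) _ (polyExt_ne_bot hc)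
    _ = z⁻¹ • polyExt D K (star c) := by rw [hbs c hc]
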